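/- Let v be as in the previous context (non-negative, even, non-increasing on (0,∞)) and suppose for all x₀ > 1/2 that lim_{n→∞} n⁻¹ ∫_{n(x₀−1/2)}^{n(x₀+1/2)} y² v(y) dy = ℓ. Then for every x₀ > 1/2, limsup_{n→∞} n²(x₀+1/2)² v(n(x₀+1/2)) ≤ ℓ ((x₀+1/2)/(x₀−1/2))². -/

import Mathlib

open Filter MeasureTheory

theorem stmt_3 (v : ℝ → ℝ) (M : ℝ) (hbdd : ∀ y, |v y| ≤ M)
    (hnonneg : ∀ y, 0 ≤ v y) (heven : ∀ y, v (-y) = v y)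
    (hmono : ∀ ⦃x y : ℝ⦄, 0 < x → x ≤ y → v y ≤ v x)
    (ℓ : ℝ) (hℓ : 0 < ℓ)
    (hlim : ∀ x₀ : ℝ, 1/2 < x₀ →
      Tendsto (fun n : ℕ =>
          (n : ℝ)⁻¹ * ∫ y in ((n : ℝ) * (x₀ - 1/2))..((n : ℝ) * (x₀ + 1/2)), y^2 * v y)
        atTop (nhds ℓ)) :
    ∀ x₀ : ℝ, 1/2 < x₀ →
      Filter.limsup (fun n : ℕ => (n : ℝ)^2 * (x₀ + 1/2)^2 * v ((n : ℝ) * (x₀ + 1/2))) atTop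
        ≤ ℓ * ((x₀ + 1/2) / (x₀ - 1/2))^2 := by
  intro x₀ hx₀
  have hT := hlim x₀ hx₀
  set a := x₀ + 1/2 with ha
  set b := x₀ - 1/2 with hbdef
  have hb0 : 0 < b := by rw [hbdef]; linarith
  have hab : b < a := by rw [ha, hbdef]; linarith
  have ha0 : 0 < a := hb0.trans hab
  have habd : a - b = 1 := by rw [ha, hbdef]; ring
  set c : ℕ → ℝ := fun n => (n : ℝ)⁻¹ * ∫ y in ((n : ℝ) * b)..((n : ℝ) * a), y^2 * v y with hc
  have key : ∀ᶠ n : ℕ in atTop,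
      (n : ℝ)^2 * a^2 * v ((n : ℝ) * a) ≤ (a / b)^2 * c n := by
    filter_upwards [eventually_ge_atTop 1] with n hn
    have hn0 : (0:ℝ) < n := by exact_mod_cast hn
    have hnb : 0 < (n : ℝ) * b := by positivity
    have hna : (n : ℝ) * b ≤ (n : ℝ) * a := by nlinarith
    have hvint : IntervalIntegrable v volume ((n : ℝ) * b) ((n : ℝ) * a) := by
      apply AntitoneOn.intervalIntegrable
      intro x hx y hy hxy
      rw [Set.uIcc_of_le hna] at hx hy
      exact hmono (lt_of_lt_of_le hnb hx.1) hxy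
    have hint : IntervalIntegrable (fun y => y^2 * v y) volume ((n : ℝ) * b) ((n : ℝ) * a) :=
      hvint.continuousOn_mul ((continuous_pow 2).continuousOn)
    have hlow : (n : ℝ)^3 * b^2 * v ((n : ℝ) * a)
        ≤ ∫ y in ((n : ℝ) * b)..((n : ℝ) * a), y^2 * v y := by
      have hmon := intervalIntegral.integral_mono_on hna
        (intervalIntegrable_const (c := ((n : ℝ) * b)^2 * v ((n : ℝ) * a))) hint ?_
      · rw [intervalIntegral.integral_const, smul_eq_mul] at hmon
        have e : ((n : ℝ) * a - (n : ℝ) * b) * (((n : ℝ) * b) ^ 2 * v ((n : ℝ) * a))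
            = (n : ℝ)^3 * b^2 * v ((n : ℝ) * a) := by
          have h' : (n : ℝ) * a - (n : ℝ) * b = (n : ℝ) := by rw [← mul_sub, habd, mul_one]
          rw [h']; ring
        linarith [hmon, e]
      · intro y hy
        have hy1 : (n : ℝ) * b ≤ y := hy.1
        have hy2 : y ≤ (n : ℝ) * a := hy.2
        have h1 : ((n : ℝ) * b)^2 ≤ y^2 := by nlinarith
        have h2 : v ((n : ℝ) * a) ≤ v y := hmono (hnb.trans_le hy1) hy2
        nlinarith [hnonneg ((n : ℝ) * a), hnonneg y]
    have heq : (a / b)^2 * ((n : ℝ)⁻¹ * ((n : ℝ)^3 * b^2 * v ((n : ℝ) * a)))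
        = (n : ℝ)^2 * a^2 * v ((n : ℝ) * a) := by
      field_simp
    calc (n : ℝ)^2 * a^2 * v ((n : ℝ) * a)
        = (a / b)^2 * ((n : ℝ)⁻¹ * ((n : ℝ)^3 * b^2 * v ((n : ℝ) * a))) := heq.symm
      _ ≤ (a / b)^2 * ((n : ℝ)⁻¹ * ∫ y in ((n : ℝ) * b)..((n : ℝ) * a), y^2 * v y) := by
          gcongr
      _ = (a / b)^2 * c n := rfl
  have hT2 : Tendsto (fun n => (a / b)^2 * c n) atTop (nhds ((a / b)^2 * ℓ)) :=
    hT.const_mul _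
  have h1 : Filter.limsup (fun n : ℕ => (n : ℝ)^2 * a^2 * v ((n : ℝ) * a)) atTop
      ≤ Filter.limsup (fun n => (a / b)^2 * c n) atTop := by
    refine Filter.limsup_le_limsup key ?_ hT2.isBoundedUnder_le
    exact Filter.isCoboundedUnder_le_of_le atTop (x := 0) (fun n => mul_nonneg (by positivity) (hnonneg _))
  rw [hT2.limsup_eq] at h1
  linarith [h1]
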